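/- Let r : ℝ → ℝ be a differentiable function with r(θ) > 0 for all θ, define the plane curve c(θ) = r(θ)·(cos θ, sin θ), and let α ∈ (0, π). If the angle between c(θ) and c'(θ) equals α for every θ ∈ ℝ, then r(θ) = r(0)·e^{(cot α)·θ} for all θ; that is, every equiangular plane curve is a logarithmic spiral. -/

import Mathlib

open Real

/-- The plane curve `c(θ) = r(θ)·(cos θ, sin θ)` with polar radius `r`. -/
noncomputable def polarCurve (r : ℝ → ℝ) (θ : ℝ) : EuclideanSpace ℝ (Fin 2) :=
  WithLp.toLp 2 ![r θ * Real.cos θ, r θ * Real.sin θ]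

lemma polarCurve_hasDerivAt (r : ℝ → ℝ) (hr : Differentiable ℝ r) (θ : ℝ) :
    HasDerivAt (polarCurve r) ((EuclideanSpace.equiv (Fin 2) ℝ).symm
      ![deriv r θ * Real.cos θ - r θ * Real.sin θ,
        deriv r θ * Real.sin θ + r θ * Real.cos θ]) θ := by
  have h : HasDerivAt (fun t => (![r t * Real.cos t, r t * Real.sin t] : Fin 2 → ℝ))
      ![deriv r θ * Real.cos θ - r θ * Real.sin θ,
        deriv r θ * Real.sin θ + r θ * Real.cos θ] θ := by
    rw [hasDerivAt_pi]
    intro i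
    fin_cases i
    · show HasDerivAt (fun t => r t * Real.cos t) (deriv r θ * Real.cos θ - r θ * Real.sin θ) θ
      exact ((hr θ).hasDerivAt.mul (Real.hasDerivAt_cos θ)).congr_deriv (by ring)
    · show HasDerivAt (fun t => r t * Real.sin t) (deriv r θ * Real.sin θ + r θ * Real.cos θ) θ
      exact ((hr θ).hasDerivAt.mul (Real.hasDerivAt_sin θ)).congr_deriv (by ring)
  exact ((EuclideanSpace.equiv (Fin 2) ℝ).symm.toContinuousLinearMap.hasFDerivAt).comp_hasDerivAt θ h

/-- Every equiangular plane curve is a logarithmic spiral: if `r` is differentiable and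
positive, `α ∈ (0, π)`, and the angle between `c(θ) = r(θ)·(cos θ, sin θ)` and `c'(θ)`
equals `α` for every `θ`, then `r(θ) = r(0)·e^{(cot α)θ}`. -/
theorem equiangular_curve_is_logSpiral (r : ℝ → ℝ) (hr : Differentiable ℝ r)
    (hrpos : ∀ θ, 0 < r θ) (α : ℝ) (hα : α ∈ Set.Ioo 0 π)
    (hangle : ∀ θ : ℝ,
      InnerProductGeometry.angle (polarCurve r θ) (deriv (polarCurve r) θ) = α) :
    ∀ θ : ℝ, r θ = r 0 * Real.exp (Real.cot α * θ) := by
  have hsin : 0 < Real.sin α := Real.sin_pos_of_pos_of_lt_pi hα.1 hα.2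
  set k := Real.cot α with hk
  have key : ∀ θ, deriv r θ = k * r θ := by
    intro θ
    set a := r θ
    set a' := deriv r θ
    have hder := polarCurve_hasDerivAt r hr θ
    have hderiv : deriv (polarCurve r) θ = (EuclideanSpace.equiv (Fin 2) ℝ).symm
      ![a' * Real.cos θ - a * Real.sin θ, a' * Real.sin θ + a * Real.cos θ] := hder.deriv
    have hcos := InnerProductGeometry.cos_angle (polarCurve r θ) (deriv (polarCurve r) θ)
    rw [hangle θ, hderiv] at hcos
    have hinner : (inner ℝ (polarCurve r θ) ((EuclideanSpace.equiv (Fin 2) ℝ).symm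
        ![a' * Real.cos θ - a * Real.sin θ, a' * Real.sin θ + a * Real.cos θ]) : ℝ)
        = a * a' := by
      simp [polarCurve, PiLp.inner_apply, Fin.sum_univ_two, EuclideanSpace.equiv]
      linear_combination (a * a') * Real.sin_sq_add_cos_sq θ
    have hn1 : ‖polarCurve r θ‖ = a := by
      rw [EuclideanSpace.norm_eq]
      simp only [polarCurve]
      rw [Fin.sum_univ_two]
      simp only [Matrix.cons_val_zero, Matrix.cons_val_one, Matrix.head_cons]
      rw [show ‖a * Real.cos θ‖^2 + ‖a * Real.sin θ‖^2 = a^2 by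
        simp [Real.norm_eq_abs, sq_abs, mul_pow]
        linear_combination (a ^ 2) * Real.sin_sq_add_cos_sq θ]
      exact Real.sqrt_sq (hrpos θ).le
    have hn2 : ‖(EuclideanSpace.equiv (Fin 2) ℝ).symm
        ![a' * Real.cos θ - a * Real.sin θ, a' * Real.sin θ + a * Real.cos θ]‖
        = Real.sqrt (a'^2 + a^2) := by
      rw [EuclideanSpace.norm_eq, Fin.sum_univ_two]
      congr 1
      simp [EuclideanSpace.equiv, Real.norm_eq_abs, sq_abs]
      linear_combination (a' ^ 2 + a ^ 2) * Real.sin_sq_add_cos_sq θ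
    rw [hinner, hn1, hn2] at hcos
    have ha : 0 < a := hrpos θ
    have hs : Real.sqrt (a'^2 + a^2) > 0 := by
      apply Real.sqrt_pos.2; nlinarith
    have hcos' : Real.cos α * Real.sqrt (a'^2 + a^2) = a' := by
      field_simp at hcos
      nlinarith [hcos]
    have hsin' : Real.sin α * Real.sqrt (a'^2 + a^2) = a := by
      have hsq : Real.sqrt (a'^2 + a^2) ^ 2 = a'^2 + a^2 :=
        Real.sq_sqrt (by positivity)
      have hc2 : Real.cos α ^ 2 * (a'^2 + a^2) = a'^2 := by
        have h := congrArg (· ^ 2) hcos'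
        simpa [mul_pow, hsq] using h
      have h1 : (Real.sin α * Real.sqrt (a'^2 + a^2))^2 = a^2 := by
        have hpy := Real.sin_sq_add_cos_sq α
        rw [mul_pow, hsq]
        linear_combination (a'^2 + a^2) * hpy - hc2
      have h2 : 0 < Real.sin α * Real.sqrt (a'^2 + a^2) := by positivity
      nlinarith
    rw [hk, Real.cot_eq_cos_div_sin]
    field_simp
    linear_combination Real.cos α * hsin' - Real.sin α * hcos'
  -- ODE part
  have hg : ∀ θ, HasDerivAt (fun t => r t * Real.exp (-(k * t))) 0 θ := by
    intro θ
    have h1 : HasDerivAt (fun t => Real.exp (-(k * t))) (-k * Real.exp (-(k * θ))) θ := by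
      have := (Real.hasDerivAt_exp (-(k * θ))).comp θ
        (((hasDerivAt_id θ).const_mul k).neg)
      exact this.congr_deriv (by ring)
    have := ((hr θ).hasDerivAt.mul h1)
    rw [key θ] at this
    exact this.congr_deriv (by ring)
  have hconst : ∀ θ, r θ * Real.exp (-(k * θ)) = r 0 * Real.exp (-(k * 0)) := by
    intro θ
    exact is_const_of_deriv_eq_zero (fun t => ((hg t).differentiableAt))
      (fun t => (hg t).deriv) θ 0
  intro θ
  have := hconst θ
  simp at this
  have hepos := Real.exp_pos (-(k * θ))
  have : r θ = r 0 * Real.exp (k * θ) := by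
    rw [← this]
    rw [mul_assoc, ← Real.exp_add]
    simp
  exact this
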